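/- Energy decomposition of the upwind advection term (Lemma B.7, identity part): for all φ, φ' : (ZMod N_x) × (ZMod N_y) → ℝ^{N_q}, Σ_{(i,j)} Σ_ℓ w_ℓ φ'(i,j)_ℓ (ℒ_x φ)(i,j)_ℓ · ΔxΔy = A + B, where A = (Δx/2) Σ_{(i,j)} Σ_ℓ w_ℓ |Ω_ℓ| ((D⁺_x φ')(i,j)_ℓ)² · ΔxΔy and B = − Σ_{(i,j)} Σ_ℓ w_ℓ ( Ω⁺_ℓ (D⁺_x φ')(i,j)_ℓ + Ω⁻_ℓ (D⁻_x φ')(i,j)_ℓ ) · (φ(i,j)_ℓ − φ'(i,j)_ℓ) · ΔxΔy. -/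
import Mathlib


open Finset


lemma upwind_key {n : ℕ} [NeZero n] (Δx : ℝ) (hΔx : Δx ≠ 0) (d c Ω b : ℝ)
    (f g : ZMod n → ℝ) :
    (∑ i : ZMod n, c * g i *
        ((Ω - b) / 2 * ((f (i + 1) - f i) / Δx)
          + (Ω + b) / 2 * ((f i - f (i - 1)) / Δx)) * d)
    = ∑ i : ZMod n,
        (Δx / 2 * (c * b * ((g (i + 1) - g i) / Δx) ^ 2 * d)
          + -(c * ((Ω + b) / 2 * ((g (i + 1) - g i) / Δx)
                + (Ω - b) / 2 * ((g i - g (i - 1)) / Δx))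
              * (f i - g i) * d)) := by
  have hs : ∀ F : ZMod n → ℝ, ∑ i : ZMod n, F i = ∑ i : ZMod n, F (i + 1) :=
    fun F => (Equiv.sum_comp (Equiv.addRight (1 : ZMod n)) F).symm
  -- atomic shift facts
  have h3 : ∑ i : ZMod n, g i * f (i - 1) = ∑ i : ZMod n, g (i + 1) * f i := by
    rw [hs (fun i => g i * f (i - 1))]; simp
  have h7 : ∑ i : ZMod n, g (i - 1) * f i = ∑ i : ZMod n, g i * f (i + 1) := by
    rw [hs (fun i => g (i - 1) * f i)]; simp
  have h6 : ∑ i : ZMod n, g (i + 1) * g (i + 1) = ∑ i : ZMod n, g i * g i :=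
    (hs (fun i => g i * g i)).symm
  have h8 : ∑ i : ZMod n, g (i - 1) * g i = ∑ i : ZMod n, g i * g (i + 1) := by
    rw [hs (fun i => g (i - 1) * g i)]; simp
  have hL : (∑ i : ZMod n, c * g i *
        ((Ω - b) / 2 * ((f (i + 1) - f i) / Δx)
          + (Ω + b) / 2 * ((f i - f (i - 1)) / Δx)) * d)
      = (c * d * (Ω - b) / (2 * Δx)) * (∑ i : ZMod n, g i * f (i + 1))
        + (c * d * b / Δx) * (∑ i : ZMod n, g i * f i)
        + (-(c * d * (Ω + b) / (2 * Δx))) * (∑ i : ZMod n, g i * f (i - 1)) := by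
    rw [mul_sum, mul_sum, mul_sum, ← sum_add_distrib, ← sum_add_distrib]
    exact sum_congr rfl fun i _ => by field_simp; ring
  have hR : (∑ i : ZMod n,
        (Δx / 2 * (c * b * ((g (i + 1) - g i) / Δx) ^ 2 * d)
          + -(c * ((Ω + b) / 2 * ((g (i + 1) - g i) / Δx)
                + (Ω - b) / 2 * ((g i - g (i - 1)) / Δx))
              * (f i - g i) * d)))
      = (c * d * b / (2 * Δx)) * (∑ i : ZMod n, g (i + 1) * g (i + 1))
        + (c * d * (Ω - b) / (2 * Δx)) * (∑ i : ZMod n, g i * g (i + 1))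
        + (-(c * d * b / (2 * Δx))) * (∑ i : ZMod n, g i * g i)
        + (-(c * d * (Ω + b) / (2 * Δx))) * (∑ i : ZMod n, g (i + 1) * f i)
        + (c * d * b / Δx) * (∑ i : ZMod n, g i * f i)
        + (c * d * (Ω - b) / (2 * Δx)) * (∑ i : ZMod n, g (i - 1) * f i)
        + (-(c * d * (Ω - b) / (2 * Δx))) * (∑ i : ZMod n, g (i - 1) * g i) := by
    rw [mul_sum, mul_sum, mul_sum, mul_sum, mul_sum, mul_sum, mul_sum,
      ← sum_add_distrib, ← sum_add_distrib, ← sum_add_distrib, ← sum_add_distrib,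
      ← sum_add_distrib, ← sum_add_distrib]
    exact sum_congr rfl fun i _ => by field_simp; ring
  rw [hL, hR, h3, h6, h7, h8]
  ring

/-- Energy decomposition of the upwind advection term (Lemma B.7, identity part):
`Σ w_ℓ φ'(p)_ℓ (ℒ_x φ)(p)_ℓ ΔxΔy = A + B` with the numerical-diffusion term `A`
in `φ'` and the cross term `B` in `φ − φ'`. -/
theorem upwind_energy_decomposition
    (Nx Ny Nq : ℕ) [NeZero Nx] [NeZero Ny]
    (Δx Δy : ℝ) (hΔx : 0 < Δx) (hΔy : 0 < Δy)
    (w Ω : Fin Nq → ℝ) (hw : ∀ ℓ, 0 ≤ w ℓ)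
    (φ φ' : ZMod Nx × ZMod Ny → Fin Nq → ℝ) :
    (∑ p : ZMod Nx × ZMod Ny, ∑ ℓ : Fin Nq,
        w ℓ * φ' p ℓ *
          ((Ω ℓ - |Ω ℓ|) / 2 * ((φ (p.1 + 1, p.2) ℓ - φ p ℓ) / Δx)
           + (Ω ℓ + |Ω ℓ|) / 2 * ((φ p ℓ - φ (p.1 - 1, p.2) ℓ) / Δx))
          * (Δx * Δy))
    = (Δx / 2) * ∑ p : ZMod Nx × ZMod Ny, ∑ ℓ : Fin Nq,
        w ℓ * |Ω ℓ| * (((φ' (p.1 + 1, p.2) ℓ - φ' p ℓ) / Δx)) ^ 2 * (Δx * Δy)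
      + -∑ p : ZMod Nx × ZMod Ny, ∑ ℓ : Fin Nq,
          w ℓ * ((Ω ℓ + |Ω ℓ|) / 2 * ((φ' (p.1 + 1, p.2) ℓ - φ' p ℓ) / Δx)
                 + (Ω ℓ - |Ω ℓ|) / 2 * ((φ' p ℓ - φ' (p.1 - 1, p.2) ℓ) / Δx))
            * (φ p ℓ - φ' p ℓ) * (Δx * Δy) := by
  have hΔx' : Δx ≠ 0 := ne_of_gt hΔx
  rw [Fintype.sum_prod_type, Fintype.sum_prod_type, Fintype.sum_prod_type]
  rw [Finset.sum_comm (f := fun i j => ∑ ℓ : Fin Nq,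
        w ℓ * φ' (i, j) ℓ *
          ((Ω ℓ - |Ω ℓ|) / 2 * ((φ (i + 1, j) ℓ - φ (i, j) ℓ) / Δx)
           + (Ω ℓ + |Ω ℓ|) / 2 * ((φ (i, j) ℓ - φ (i - 1, j) ℓ) / Δx))
          * (Δx * Δy))]
  rw [Finset.sum_comm (f := fun i j => ∑ ℓ : Fin Nq,
        w ℓ * |Ω ℓ| * (((φ' (i + 1, j) ℓ - φ' (i, j) ℓ) / Δx)) ^ 2 * (Δx * Δy))]
  rw [Finset.sum_comm (f := fun i j => ∑ ℓ : Fin Nq,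
          w ℓ * ((Ω ℓ + |Ω ℓ|) / 2 * ((φ' (i + 1, j) ℓ - φ' (i, j) ℓ) / Δx)
                 + (Ω ℓ - |Ω ℓ|) / 2 * ((φ' (i, j) ℓ - φ' (i - 1, j) ℓ) / Δx))
            * (φ (i, j) ℓ - φ' (i, j) ℓ) * (Δx * Δy))]
  rw [Finset.mul_sum, ← Finset.sum_neg_distrib, ← Finset.sum_add_distrib]
  refine Finset.sum_congr rfl fun j _ => ?_
  rw [Finset.sum_comm, Finset.sum_comm (f := fun i ℓ =>
        w ℓ * |Ω ℓ| * (((φ' (i + 1, j) ℓ - φ' (i, j) ℓ) / Δx)) ^ 2 * (Δx * Δy)),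
      Finset.sum_comm (f := fun i ℓ =>
          w ℓ * ((Ω ℓ + |Ω ℓ|) / 2 * ((φ' (i + 1, j) ℓ - φ' (i, j) ℓ) / Δx)
                 + (Ω ℓ - |Ω ℓ|) / 2 * ((φ' (i, j) ℓ - φ' (i - 1, j) ℓ) / Δx))
            * (φ (i, j) ℓ - φ' (i, j) ℓ) * (Δx * Δy))]
  rw [Finset.mul_sum, ← Finset.sum_neg_distrib, ← Finset.sum_add_distrib]
  refine Finset.sum_congr rfl fun ℓ _ => ?_
  rw [Finset.mul_sum, ← Finset.sum_neg_distrib, ← Finset.sum_add_distrib]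
  exact upwind_key Δx hΔx' (Δx * Δy) (w ℓ) (Ω ℓ) |Ω ℓ|
    (fun i => φ (i, j) ℓ) (fun i => φ' (i, j) ℓ)
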